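/- Every n-qubit Pauli assignment (for any n) of the two-spread hypergram S_{2s} = (V_{2s}, H_{2s}, G_{2s}) has contextuality degree 1. -/

import Mathlib

open scoped Classical
open Matrix

noncomputable section

/-- The space of `n`-qubit operators, realized as matrices indexed by
`Fin n → Fin 2` (the `n`-fold tensor-product index). -/
abbrev QMat (n : ℕ) := Matrix (Fin n → Fin 2) (Fin n → Fin 2) ℂ

/-- The four Pauli matrices `I, X, Y, Z`. -/
def pauliMat : Fin 4 → Matrix (Fin 2) (Fin 2) ℂ
  | ⟨0, _⟩ => 1
  | ⟨1, _⟩ => !![0, 1; 1, 0]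
  | ⟨2, _⟩ => !![0, -Complex.I; Complex.I, 0]
  | ⟨3, _⟩ => !![1, 0; 0, -1]

/-- The `n`-fold Kronecker (tensor) product `G₁ ⊗ ⋯ ⊗ Gₙ` of the Pauli matrices
selected by `g : Fin n → Fin 4`, as a matrix indexed by `Fin n → Fin 2`. -/
def nPauli {n : ℕ} (g : Fin n → Fin 4) : QMat n :=
  Matrix.of fun r c => ∏ k, pauliMat (g k) (r k) (c k)

/-- `M` is an `n`-qubit Pauli observable. -/
def IsPauliObs (n : ℕ) (M : QMat n) : Prop := ∃ g : Fin n → Fin 4, M = nPauli g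

/-- `I^⊗n`, the `n`-fold tensor product of the identity. -/
def idN (n : ℕ) : QMat n := nPauli (fun _ => ⟨0, by omega⟩)

/-- Product of `f` over a finite set of naturals, taken in increasing order
(well-defined without commutativity; agrees with the unordered product when the
factors pairwise commute). -/
def natFinsetProd {M : Type*} [Monoid M] (s : Finset ℕ) (f : ℕ → M) : M :=
  ((s.sort (· ≤ ·)).map f).prod

/-- `(V,H,G)` is a hypergram: `V` a nonempty finite vertex set, `H` a set of
nonempty hyperedges covering `V`, `G` a set of 2-element edges on `V` forming a
simple reduced graph, no edge of `G` being contained in a hyperedge of `H`. -/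
def IsHypergram (V : Finset ℕ) (H G : Finset (Finset ℕ)) : Prop :=
  V.Nonempty ∧
  (∀ h ∈ H, h ⊆ V ∧ h.Nonempty) ∧
  (∀ v ∈ V, ∃ h ∈ H, v ∈ h) ∧
  (∀ e ∈ G, e ⊆ V ∧ e.card = 2) ∧
  (∀ v ∈ V, ∃ e ∈ G, v ∈ e) ∧
  (∀ v ∈ V, ∀ w ∈ V,
    (∀ u ∈ V, (({v, u} : Finset ℕ) ∈ G ↔ ({w, u} : Finset ℕ) ∈ G)) → v = w) ∧
  (∀ e ∈ G, ∀ h ∈ H, ¬ e ⊆ h)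

/-- `α` is an `n`-qubit Pauli assignment of the hypergram `(V,H,G)`. -/
def IsPauliAssignment (V : Finset ℕ) (H G : Finset (Finset ℕ)) (n : ℕ)
    (α : ℕ → QMat n) : Prop :=
  (∀ v ∈ V, IsPauliObs n (α v)) ∧
  (∀ v ∈ V, α v ≠ idN n) ∧
  (∀ v₁ ∈ V, ∀ v₂ ∈ V, α v₁ = α v₂ → v₁ = v₂) ∧
  (∀ v₁ ∈ V, ∀ v₂ ∈ V, v₁ ≠ v₂ →
    (α v₁ * α v₂ = -(α v₂ * α v₁) ↔ ({v₁, v₂} : Finset ℕ) ∈ G)) ∧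
  (∀ h ∈ H, natFinsetProd h α = idN n ∨ natFinsetProd h α = -(idN n))

/-- The sign `sgn_α(h) ∈ {−1,1}` of a hyperedge `h`: `∏_{v∈h} α(v) = sgn_α(h)·I^⊗n`. -/
def quantumSgn {n : ℕ} (α : ℕ → QMat n) (h : Finset ℕ) : ℤ :=
  if natFinsetProd h α = idN n then 1 else -1

/-- The sign `sgn_a(h) = ∏_{v∈h} a(v)` of a hyperedge for a classical assignment. -/
def classicalSgn (a : ℕ → ℤ) (h : Finset ℕ) : ℤ := ∏ v ∈ h, a v

/-- The contextuality degree of a Pauli assignment: the minimum over classical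
assignments `a : V → {−1,1}` of the number of hyperedges whose signs differ. -/
def contextualityDegree {n : ℕ} (H : Finset (Finset ℕ)) (α : ℕ → QMat n) : ℕ :=
  sInf { d : ℕ | ∃ a : ℕ → ℤ, (∀ v, a v = 1 ∨ a v = -1) ∧
    d = (H.filter (fun h => quantumSgn α h ≠ classicalSgn a h)).card }

/-- The context (incidence) matrix of a hypergram over 𝔽₂. -/
def contextMatrix (V : Finset ℕ) (H : Finset (Finset ℕ)) :
    Matrix {h // h ∈ H} {v // v ∈ V} (ZMod 2) :=
  Matrix.of fun h v => if v.1 ∈ h.1 then 1 else 0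

/-- The anticommutation (adjacency) matrix of a hypergram over 𝔽₂. -/
def anticommMatrix (V : Finset ℕ) (G : Finset (Finset ℕ)) :
    Matrix {v // v ∈ V} {v // v ∈ V} (ZMod 2) :=
  Matrix.of fun i j => if ({i.1, j.1} : Finset ℕ) ∈ G then 1 else 0

/-- The standard symplectic form on `𝔽₂^{2n}`:
`⟨x,y⟩ = Σ_{k=1}^{n} (x_{2k−1} y_{2k} + x_{2k} y_{2k−1})`. -/
def sympForm (n : ℕ) (x y : Fin (2 * n) → ZMod 2) : ZMod 2 :=
  ∑ k : Fin n,
    (x ⟨2 * k.1, by have := k.2; omega⟩ * y ⟨2 * k.1 + 1, by have := k.2; omega⟩ +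
     x ⟨2 * k.1 + 1, by have := k.2; omega⟩ * y ⟨2 * k.1, by have := k.2; omega⟩)

/-- The single-qubit encoding `ψ(I)=(0,0), ψ(X)=(0,1), ψ(Y)=(1,1), ψ(Z)=(1,0)`. -/
def psi4 : Fin 4 → (ZMod 2) × (ZMod 2)
  | ⟨0, _⟩ => (0, 0)
  | ⟨1, _⟩ => (0, 1)
  | ⟨2, _⟩ => (1, 1)
  | ⟨3, _⟩ => (1, 0)

/-- The encoding `ψ` of an `n`-qubit Pauli observable (given by its tensor
factors `g`) as a vector of `𝔽₂^{2n}`, concatenating the per-factor encodings. -/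
def psiVec {n : ℕ} (g : Fin n → Fin 4) : Fin (2 * n) → ZMod 2 := fun idx =>
  if idx.1 % 2 = 0 then (psi4 (g ⟨idx.1 / 2, by have := idx.2; omega⟩)).1
  else (psi4 (g ⟨idx.1 / 2, by have := idx.2; omega⟩)).2

/-- All pairs of elements of `S` commute. -/
def PairComm {n : ℕ} (S : Finset (QMat n)) : Prop := ∀ a ∈ S, ∀ b ∈ S, a * b = b * a

/-- The (well-defined) product of a finite set of pairwise commuting matrices. -/
def commProd {n : ℕ} (S : Finset (QMat n)) (h : PairComm S) : QMat n :=
  S.noncommProd id (fun a ha b hb _ => h a ha b hb)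

/-- Pairwise commutation is inherited by subsets. -/
def pairCommOfSubset {n : ℕ} {S T : Finset (QMat n)} (hST : S ⊆ T) (h : PairComm T) :
    PairComm S := fun a ha b hb => h a (hST ha) b (hST hb)

/-- `Q` (pairwise commuting) is independent: no nonempty subset has product `±I^⊗n`. -/
def IsIndep {n : ℕ} (Q : Finset (QMat n)) (hQ : PairComm Q) : Prop :=
  ∀ S : Finset (QMat n), ∀ (hS : S ⊆ Q), S.Nonempty →
    commProd S (pairCommOfSubset hS hQ) ≠ idN n ∧
    commProd S (pairCommOfSubset hS hQ) ≠ -(idN n)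

/-- The vertex set `{1, …, 15}`. -/
def V15 : Finset ℕ := Finset.Icc 1 15

/-- The 15 lines of the doily. -/
def doilyLines : Finset (Finset ℕ) :=
  { {1,2,3}, {1,8,9}, {1,10,11}, {2,4,6}, {2,5,7}, {3,12,15}, {3,13,14},
    {4,8,12}, {4,10,14}, {5,8,13}, {5,10,15}, {6,9,15}, {6,11,13},
    {7,9,14}, {7,11,12} }

/-- The 10 lines of the two-spread `H_{2s}`. -/
def twoSpreadLines : Finset (Finset ℕ) :=
  { {1,2,3}, {1,10,11}, {2,4,6}, {3,13,14}, {4,8,12}, {5,8,13}, {5,10,15},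
    {6,9,15}, {7,9,14}, {7,11,12} }

/-- The anticommutation graph `G_d = G_{2s}`: pairs of distinct vertices not on a
common doily line. -/
def doilyG : Finset (Finset ℕ) :=
  (V15.powersetCard 2).filter (fun e => ∀ h ∈ doilyLines, ¬ e ⊆ h)


/-! ### Auxiliary machinery -/

lemma nProd_mul {n : ℕ} (A B : Fin n → Matrix (Fin 2) (Fin 2) ℂ) :
    ((Matrix.of fun r c => ∏ k, A k (r k) (c k)) : QMat n) *
      (Matrix.of fun r c => ∏ k, B k (r k) (c k)) =
      Matrix.of fun r c => ∏ k, (A k * B k) (r k) (c k) := by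
  ext r c
  simp only [Matrix.mul_apply, Matrix.of_apply]
  rw [Finset.prod_univ_sum, Fintype.piFinset_univ]
  exact Finset.sum_congr rfl fun m _ => (Finset.prod_mul_distrib).symm

def pc (a b : Fin 4) : ℤ := if a = 0 ∨ b = 0 ∨ a = b then 1 else -1

lemma pc_pm (a b : Fin 4) : pc a b = 1 ∨ pc a b = -1 := by
  unfold pc; split <;> simp

lemma pauli_sq (a : Fin 4) : pauliMat a * pauliMat a = 1 := by
  fin_cases a <;>
  · ext i j
    fin_cases i <;> fin_cases j <;>
      simp [pauliMat, Matrix.mul_apply, Fin.sum_univ_two, Matrix.one_apply]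

lemma pauli_comm (a b : Fin 4) :
    pauliMat a * pauliMat b = (pc a b : ℂ) • (pauliMat b * pauliMat a) := by
  fin_cases a <;> fin_cases b <;>
  · ext i j
    fin_cases i <;> fin_cases j <;>
      simp [pauliMat, pc, Matrix.mul_apply, Fin.sum_univ_two, Matrix.one_apply]

lemma ofProdOne {n : ℕ} :
    (Matrix.of fun r c => ∏ k : Fin n, (1 : Matrix (Fin 2) (Fin 2) ℂ) (r k) (c k)) =
      (1 : QMat n) := by
  ext r c
  by_cases h : r = c
  · subst h; simp [Matrix.one_apply]
  · obtain ⟨k, hk⟩ := Function.ne_iff.mp h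
    have h1 : (∏ k : Fin n, (1 : Matrix (Fin 2) (Fin 2) ℂ) (r k) (c k)) = 0 :=
      Finset.prod_eq_zero (Finset.mem_univ k) (Matrix.one_apply_ne hk)
    simp only [Matrix.of_apply, h1, Matrix.one_apply_ne h]

lemma nPauli_mul {n : ℕ} (g g' : Fin n → Fin 4) :
    nPauli g * nPauli g' =
      Matrix.of fun r c => ∏ k, (pauliMat (g k) * pauliMat (g' k)) (r k) (c k) :=
  nProd_mul _ _

lemma nPauli_sq {n : ℕ} (g : Fin n → Fin 4) : nPauli g * nPauli g = 1 := by
  rw [nPauli_mul]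
  have : ∀ k : Fin n, pauliMat (g k) * pauliMat (g k) = 1 := fun k => pauli_sq _
  simp only [this]
  exact ofProdOne

lemma idN_one {n : ℕ} : idN n = 1 := by
  have h0 : ∀ h : (0:ℕ) < 4, pauliMat ⟨0, h⟩ = 1 := fun _ => rfl
  rw [idN, nPauli]
  simp only [h0]
  exact ofProdOne

lemma nPauli_comm {n : ℕ} (g g' : Fin n → Fin 4) :
    ∃ c : ℤ, (c = 1 ∨ c = -1) ∧ nPauli g * nPauli g' = (c : ℂ) • (nPauli g' * nPauli g) := by
  refine ⟨∏ k, pc (g k) (g' k), ?_, ?_⟩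
  · exact Finset.prod_induction _ (fun x => x = 1 ∨ x = -1)
      (by rintro x y (rfl|rfl) (rfl|rfl) <;> norm_num) (Or.inl rfl)
      (fun k _ => pc_pm _ _)
  · rw [nPauli_mul, nPauli_mul]
    ext r c
    simp only [Matrix.of_apply, Matrix.smul_apply, smul_eq_mul]
    calc ∏ k, (pauliMat (g k) * pauliMat (g' k)) (r k) (c k)
        = ∏ k, ((pc (g k) (g' k) : ℂ) * (pauliMat (g' k) * pauliMat (g k)) (r k) (c k)) := by
          refine Finset.prod_congr rfl fun k _ => ?_
          rw [pauli_comm (g k) (g' k)]; simp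
      _ = (∏ k, (pc (g k) (g' k) : ℂ)) *
            ∏ k, (pauliMat (g' k) * pauliMat (g k)) (r k) (c k) := Finset.prod_mul_distrib
      _ = _ := by push_cast; ring

/-! ### Sorting with signs -/

def eps (Gr : Finset (Finset ℕ)) (v w : ℕ) : ℤ :=
  if ({v, w} : Finset ℕ) ∈ Gr then -1 else 1

def signIns (Gr : Finset (Finset ℕ)) (a : ℕ) : List ℕ → ℤ
  | [] => 1
  | b :: t => if a ≤ b then 1 else eps Gr a b * signIns Gr a t

def signSort (Gr : Finset (Finset ℕ)) : List ℕ → ℤ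
  | [] => 1
  | a :: t => signIns Gr a (List.insertionSort (· ≤ ·) t) * signSort Gr t

lemma ins_key {n : ℕ} (α : ℕ → QMat n)
    (Heps : ∀ a ∈ V15, ∀ b ∈ V15, a ≠ b →
      α a * α b = (eps doilyG a b : ℂ) • (α b * α a))
    (a : ℕ) (ha : a ∈ V15) :
    ∀ l : List ℕ, (∀ x ∈ l, x ∈ V15) →
    α a * (l.map α).prod =
      (signIns doilyG a l : ℂ) • (((List.orderedInsert (· ≤ ·) a l).map α).prod) := by
  intro l
  induction l with
  | nil => intro _; simp [signIns, List.orderedInsert]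
  | cons b t ih =>
    intro hmem
    by_cases hab : a ≤ b
    · simp [signIns, List.orderedInsert, hab]
    · have hbV : b ∈ V15 := hmem b (by simp)
      have hne : a ≠ b := fun h => hab (le_of_eq h)
      have htV : ∀ x ∈ t, x ∈ V15 := fun x hx => hmem x (by simp [hx])
      simp only [List.orderedInsert, if_neg hab, signIns, List.map_cons, List.prod_cons]
      rw [← mul_assoc, Heps a ha b hbV hne, smul_mul_assoc, mul_assoc, ih htV,
        mul_smul_comm, smul_smul]
      push_cast
      ring_nf

lemma sort_key {n : ℕ} (α : ℕ → QMat n)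
    (Heps : ∀ a ∈ V15, ∀ b ∈ V15, a ≠ b →
      α a * α b = (eps doilyG a b : ℂ) • (α b * α a)) :
    ∀ l : List ℕ, (∀ x ∈ l, x ∈ V15) →
    (l.map α).prod =
      (signSort doilyG l : ℂ) • (((l.insertionSort (· ≤ ·)).map α).prod) := by
  intro l
  induction l with
  | nil => intro _; simp [signSort]
  | cons a t ih =>
    intro hmem
    have haV : a ∈ V15 := hmem a (by simp)
    have htV : ∀ x ∈ t, x ∈ V15 := fun x hx => hmem x (by simp [hx])
    have hsV : ∀ x ∈ List.insertionSort (· ≤ ·) t, x ∈ V15 := fun x hx =>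
      htV x ((List.mem_insertionSort _).mp hx)
    simp only [List.map_cons, List.prod_cons, List.insertionSort, signSort]
    rw [ih htV, mul_smul_comm, ins_key α Heps a haV _ hsV, smul_smul]
    push_cast
    ring_nf
    rfl

def w30 : List ℕ := [1,2,3,1,10,11,2,4,6,3,13,14,4,8,12,5,8,13,5,10,15,6,9,15,7,9,14,7,11,12]

lemma sort_eq_of_sorted {s : Finset ℕ} {l : List ℕ} (h1 : (l : Multiset ℕ) = s.1)
    (h2 : l.Pairwise (· ≤ ·)) : s.sort (· ≤ ·) = l := by
  have hp : (↑(s.sort (· ≤ ·)) : Multiset ℕ) = (↑l : Multiset ℕ) := by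
    rw [Finset.sort_eq, h1]
  exact List.Perm.eq_of_pairwise' (Finset.pairwise_sort _ _) h2 (Quotient.exact hp)

lemma pair_cancel {n : ℕ} (x y : QMat n) (hx : x * x = 1) : x * (x * y) = y := by
  rw [← mul_assoc, hx, one_mul]
set_option maxHeartbeats 1000000 in
/-- Every Pauli assignment of the two-spread hypergram
`S_{2s} = (V_{2s}, H_{2s}, G_{2s})` has contextuality degree 1. -/
theorem twoSpread_contextuality_degree_one
    (n : ℕ) (α : ℕ → QMat n)
    (h : IsPauliAssignment V15 twoSpreadLines doilyG n α) :
    contextualityDegree twoSpreadLines α = 1 := by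
  obtain ⟨hobs, hne, hinj, hacomm, hprod⟩ := h
  -- commutation control
  have Heps : ∀ a ∈ V15, ∀ b ∈ V15, a ≠ b →
      α a * α b = (eps doilyG a b : ℂ) • (α b * α a) := by
    intro a ha b hb hab
    unfold eps
    by_cases hg : ({a, b} : Finset ℕ) ∈ doilyG
    · rw [if_pos hg]
      push_cast
      rw [neg_smul, one_smul]
      exact (hacomm a ha b hb hab).mpr hg
    · rw [if_neg hg]
      push_cast
      rw [one_smul]
      obtain ⟨g, hg1⟩ := hobs a ha
      obtain ⟨g', hg2⟩ := hobs b hb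
      obtain ⟨c, hcpm, hc⟩ := nPauli_comm g g'
      rcases hcpm with rfl | rfl
      · rw [hg1, hg2, hc]; push_cast; rw [one_smul]
      · exfalso
        apply hg
        apply (hacomm a ha b hb hab).mp
        rw [hg1, hg2, hc]
        push_cast
        rw [neg_smul, one_smul]
  have Hsq : ∀ v ∈ V15, α v * α v = 1 := by
    intro v hv; obtain ⟨g, hg1⟩ := hobs v hv; rw [hg1]; exact nPauli_sq g
  have Hline : ∀ hh ∈ twoSpreadLines,
      natFinsetProd hh α = ((quantumSgn α hh : ℤ) : ℂ) • (1 : QMat n) := by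
    intro hh hmem
    unfold quantumSgn
    split
    · next he => rw [he, idN_one]; norm_num
    · next he =>
      rcases hprod hh hmem with h1 | h1
      · exact absurd h1 he
      · rw [h1, idN_one]; push_cast; rw [neg_smul, one_smul]
  have hpm : ∀ hh : Finset ℕ, quantumSgn α hh = 1 ∨ quantumSgn α hh = -1 := by
    intro hh; unfold quantumSgn; split <;> simp
  -- expand the ten lines as sorted lists
  have e1 : natFinsetProd ({1,2,3} : Finset ℕ) α = ([1,2,3].map α).prod := by
    rw [natFinsetProd, sort_eq_of_sorted (l := [1,2,3]) (by decide) (by decide)]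
  have e2 : natFinsetProd ({1,10,11} : Finset ℕ) α = ([1,10,11].map α).prod := by
    rw [natFinsetProd, sort_eq_of_sorted (l := [1,10,11]) (by decide) (by decide)]
  have e3 : natFinsetProd ({2,4,6} : Finset ℕ) α = ([2,4,6].map α).prod := by
    rw [natFinsetProd, sort_eq_of_sorted (l := [2,4,6]) (by decide) (by decide)]
  have e4 : natFinsetProd ({3,13,14} : Finset ℕ) α = ([3,13,14].map α).prod := by
    rw [natFinsetProd, sort_eq_of_sorted (l := [3,13,14]) (by decide) (by decide)]
  have e5 : natFinsetProd ({4,8,12} : Finset ℕ) α = ([4,8,12].map α).prod := by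
    rw [natFinsetProd, sort_eq_of_sorted (l := [4,8,12]) (by decide) (by decide)]
  have e6 : natFinsetProd ({5,8,13} : Finset ℕ) α = ([5,8,13].map α).prod := by
    rw [natFinsetProd, sort_eq_of_sorted (l := [5,8,13]) (by decide) (by decide)]
  have e7 : natFinsetProd ({5,10,15} : Finset ℕ) α = ([5,10,15].map α).prod := by
    rw [natFinsetProd, sort_eq_of_sorted (l := [5,10,15]) (by decide) (by decide)]
  have e8 : natFinsetProd ({6,9,15} : Finset ℕ) α = ([6,9,15].map α).prod := by
    rw [natFinsetProd, sort_eq_of_sorted (l := [6,9,15]) (by decide) (by decide)]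
  have e9 : natFinsetProd ({7,9,14} : Finset ℕ) α = ([7,9,14].map α).prod := by
    rw [natFinsetProd, sort_eq_of_sorted (l := [7,9,14]) (by decide) (by decide)]
  have e10 : natFinsetProd ({7,11,12} : Finset ℕ) α = ([7,11,12].map α).prod := by
    rw [natFinsetProd, sort_eq_of_sorted (l := [7,11,12]) (by decide) (by decide)]
  have Hsplit : (w30.map α).prod =
      natFinsetProd ({1,2,3} : Finset ℕ) α * (natFinsetProd ({1,10,11} : Finset ℕ) α *
      (natFinsetProd ({2,4,6} : Finset ℕ) α * (natFinsetProd ({3,13,14} : Finset ℕ) α *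
      (natFinsetProd ({4,8,12} : Finset ℕ) α * (natFinsetProd ({5,8,13} : Finset ℕ) α *
      (natFinsetProd ({5,10,15} : Finset ℕ) α * (natFinsetProd ({6,9,15} : Finset ℕ) α *
      (natFinsetProd ({7,9,14} : Finset ℕ) α * natFinsetProd ({7,11,12} : Finset ℕ) α)))))))) := by
    rw [e1, e2, e3, e4, e5, e6, e7, e8, e9, e10]
    simp [w30, mul_assoc]
  have hwV : ∀ x ∈ w30, x ∈ V15 := by decide
  have Hsorted : ((List.insertionSort (· ≤ ·) w30).map α).prod = 1 := by
    rw [show List.insertionSort (· ≤ ·) w30 =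
      [1,1,2,2,3,3,4,4,5,5,6,6,7,7,8,8,9,9,10,10,11,11,12,12,13,13,14,14,15,15] from by decide]
    simp only [List.map_cons, List.map_nil, List.prod_cons, List.prod_nil]
    rw [pair_cancel _ _ (Hsq 1 (by decide)), pair_cancel _ _ (Hsq 2 (by decide)),
      pair_cancel _ _ (Hsq 3 (by decide)), pair_cancel _ _ (Hsq 4 (by decide)),
      pair_cancel _ _ (Hsq 5 (by decide)), pair_cancel _ _ (Hsq 6 (by decide)),
      pair_cancel _ _ (Hsq 7 (by decide)), pair_cancel _ _ (Hsq 8 (by decide)),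
      pair_cancel _ _ (Hsq 9 (by decide)), pair_cancel _ _ (Hsq 10 (by decide)),
      pair_cancel _ _ (Hsq 11 (by decide)), pair_cancel _ _ (Hsq 12 (by decide)),
      pair_cancel _ _ (Hsq 13 (by decide)), pair_cancel _ _ (Hsq 14 (by decide)),
      pair_cancel _ _ (Hsq 15 (by decide))]
  have Hsign : (w30.map α).prod = ((-1 : ℤ) : ℂ) • (1 : QMat n) := by
    rw [sort_key α Heps w30 hwV, Hsorted,
      show signSort doilyG w30 = -1 from by decide]
  have Hq : (w30.map α).prod =
      ((quantumSgn α ({1,2,3} : Finset ℕ) * quantumSgn α ({1,10,11} : Finset ℕ) *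
        quantumSgn α ({2,4,6} : Finset ℕ) * quantumSgn α ({3,13,14} : Finset ℕ) *
        quantumSgn α ({4,8,12} : Finset ℕ) * quantumSgn α ({5,8,13} : Finset ℕ) *
        quantumSgn α ({5,10,15} : Finset ℕ) * quantumSgn α ({6,9,15} : Finset ℕ) *
        quantumSgn α ({7,9,14} : Finset ℕ) * quantumSgn α ({7,11,12} : Finset ℕ) : ℤ) : ℂ)
        • (1 : QMat n) := by
    rw [Hsplit, Hline _ (by decide), Hline _ (by decide), Hline _ (by decide),
      Hline _ (by decide), Hline _ (by decide), Hline _ (by decide), Hline _ (by decide),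
      Hline _ (by decide), Hline _ (by decide), Hline _ (by decide)]
    simp only [smul_mul_assoc, mul_smul_comm, one_mul, smul_smul]
    congr 1
    push_cast
    ring
  have Hsval : quantumSgn α ({1,2,3} : Finset ℕ) * quantumSgn α ({1,10,11} : Finset ℕ) *
        quantumSgn α ({2,4,6} : Finset ℕ) * quantumSgn α ({3,13,14} : Finset ℕ) *
        quantumSgn α ({4,8,12} : Finset ℕ) * quantumSgn α ({5,8,13} : Finset ℕ) *
        quantumSgn α ({5,10,15} : Finset ℕ) * quantumSgn α ({6,9,15} : Finset ℕ) *
        quantumSgn α ({7,9,14} : Finset ℕ) * quantumSgn α ({7,11,12} : Finset ℕ) = -1 := by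
    have h2 := Hq.symm.trans Hsign
    have h3 := Matrix.ext_iff.mpr h2 (fun _ => 0) (fun _ => 0)
    simp only [Matrix.smul_apply, Matrix.one_apply_eq, smul_eq_mul, mul_one] at h3
    exact_mod_cast h3
  have pmmul : ∀ x y : ℤ, (x = 1 ∨ x = -1) → (y = 1 ∨ y = -1) → (x*y = 1 ∨ x*y = -1) := by
    rintro x y (rfl|rfl) (rfl|rfl) <;> norm_num
  -- Part A: degree 0 is impossible
  have h0notin : (0:ℕ) ∉ { d : ℕ | ∃ a : ℕ → ℤ, (∀ v, a v = 1 ∨ a v = -1) ∧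
      d = (twoSpreadLines.filter
        (fun hh => quantumSgn α hh ≠ classicalSgn a hh)).card } := by
    rintro ⟨a, ha, hcard⟩
    have hempty : twoSpreadLines.filter
        (fun hh => quantumSgn α hh ≠ classicalSgn a hh) = ∅ :=
      Finset.card_eq_zero.mp hcard.symm
    have hall : ∀ hh ∈ twoSpreadLines, quantumSgn α hh = classicalSgn a hh := by
      intro hh hmem
      by_contra hcon
      have hmf : hh ∈ twoSpreadLines.filter
          (fun hh => quantumSgn α hh ≠ classicalSgn a hh) :=
        Finset.mem_filter.mpr ⟨hmem, hcon⟩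
      rw [hempty] at hmf
      exact absurd hmf (Finset.notMem_empty _)
    have hasq : ∀ v, a v * a v = 1 := by
      intro v; rcases ha v with h1 | h1 <;> rw [h1] <;> norm_num
    rw [hall _ (by decide), hall _ (by decide), hall _ (by decide), hall _ (by decide),
      hall _ (by decide), hall _ (by decide), hall _ (by decide), hall _ (by decide),
      hall _ (by decide), hall _ (by decide)] at Hsval
    unfold classicalSgn at Hsval
    rw [show (∏ v ∈ ({1,2,3}:Finset ℕ), a v) = a 1 * (a 2 * a 3) from by
          simp [Finset.prod_insert, Finset.mem_insert],
        show (∏ v ∈ ({1,10,11}:Finset ℕ), a v) = a 1 * (a 10 * a 11) from by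
          simp [Finset.prod_insert, Finset.mem_insert],
        show (∏ v ∈ ({2,4,6}:Finset ℕ), a v) = a 2 * (a 4 * a 6) from by
          simp [Finset.prod_insert, Finset.mem_insert],
        show (∏ v ∈ ({3,13,14}:Finset ℕ), a v) = a 3 * (a 13 * a 14) from by
          simp [Finset.prod_insert, Finset.mem_insert],
        show (∏ v ∈ ({4,8,12}:Finset ℕ), a v) = a 4 * (a 8 * a 12) from by
          simp [Finset.prod_insert, Finset.mem_insert],
        show (∏ v ∈ ({5,8,13}:Finset ℕ), a v) = a 5 * (a 8 * a 13) from by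
          simp [Finset.prod_insert, Finset.mem_insert],
        show (∏ v ∈ ({5,10,15}:Finset ℕ), a v) = a 5 * (a 10 * a 15) from by
          simp [Finset.prod_insert, Finset.mem_insert],
        show (∏ v ∈ ({6,9,15}:Finset ℕ), a v) = a 6 * (a 9 * a 15) from by
          simp [Finset.prod_insert, Finset.mem_insert],
        show (∏ v ∈ ({7,9,14}:Finset ℕ), a v) = a 7 * (a 9 * a 14) from by
          simp [Finset.prod_insert, Finset.mem_insert],
        show (∏ v ∈ ({7,11,12}:Finset ℕ), a v) = a 7 * (a 11 * a 12) from by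
          simp [Finset.prod_insert, Finset.mem_insert]] at Hsval
    have hone : (a 1 * (a 2 * a 3)) * (a 1 * (a 10 * a 11)) * (a 2 * (a 4 * a 6)) *
        (a 3 * (a 13 * a 14)) * (a 4 * (a 8 * a 12)) * (a 5 * (a 8 * a 13)) *
        (a 5 * (a 10 * a 15)) * (a 6 * (a 9 * a 15)) * (a 7 * (a 9 * a 14)) *
        (a 7 * (a 11 * a 12)) = 1 := by
      calc (a 1 * (a 2 * a 3)) * (a 1 * (a 10 * a 11)) * (a 2 * (a 4 * a 6)) *
            (a 3 * (a 13 * a 14)) * (a 4 * (a 8 * a 12)) * (a 5 * (a 8 * a 13)) *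
            (a 5 * (a 10 * a 15)) * (a 6 * (a 9 * a 15)) * (a 7 * (a 9 * a 14)) *
            (a 7 * (a 11 * a 12))
          = (a 1 * a 1) * ((a 2 * a 2) * ((a 3 * a 3) * ((a 4 * a 4) * ((a 5 * a 5) *
            ((a 6 * a 6) * ((a 7 * a 7) * ((a 8 * a 8) * ((a 9 * a 9) * ((a 10 * a 10) *
            ((a 11 * a 11) * ((a 12 * a 12) * ((a 13 * a 13) * ((a 14 * a 14) *
            (a 15 * a 15)))))))))))))) := by ring
        _ = 1 := by simp only [hasq]; norm_num
    rw [hone] at Hsval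
    norm_num at Hsval
  -- Part B: a classical assignment achieving exactly one mismatch
  set q1 := quantumSgn α ({1,2,3} : Finset ℕ) with hq1
  set q2 := quantumSgn α ({1,10,11} : Finset ℕ) with hq2
  set q3 := quantumSgn α ({2,4,6} : Finset ℕ) with hq3
  set q4 := quantumSgn α ({3,13,14} : Finset ℕ) with hq4
  set q5 := quantumSgn α ({4,8,12} : Finset ℕ) with hq5
  set q6 := quantumSgn α ({5,8,13} : Finset ℕ) with hq6
  set q7 := quantumSgn α ({5,10,15} : Finset ℕ) with hq7
  set q8 := quantumSgn α ({6,9,15} : Finset ℕ) with hq8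
  set q9 := quantumSgn α ({7,9,14} : Finset ℕ) with hq9
  set q10 := quantumSgn α ({7,11,12} : Finset ℕ) with hq10
  have p1 : q1 = 1 ∨ q1 = -1 := by rw [hq1]; exact hpm _
  have p2 : q2 = 1 ∨ q2 = -1 := by rw [hq2]; exact hpm _
  have p3 : q3 = 1 ∨ q3 = -1 := by rw [hq3]; exact hpm _
  have p4 : q4 = 1 ∨ q4 = -1 := by rw [hq4]; exact hpm _
  have p5 : q5 = 1 ∨ q5 = -1 := by rw [hq5]; exact hpm _
  have p6 : q6 = 1 ∨ q6 = -1 := by rw [hq6]; exact hpm _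
  have p7 : q7 = 1 ∨ q7 = -1 := by rw [hq7]; exact hpm _
  have p8 : q8 = 1 ∨ q8 = -1 := by rw [hq8]; exact hpm _
  have p9 : q9 = 1 ∨ q9 = -1 := by rw [hq9]; exact hpm _
  have p10 : q10 = 1 ∨ q10 = -1 := by rw [hq10]; exact hpm _
  have sq1 : q1 * q1 = 1 := by rcases p1 with h1 | h1 <;> rw [h1] <;> norm_num
  have sq5 : q5 * q5 = 1 := by rcases p5 with h1 | h1 <;> rw [h1] <;> norm_num
  have sq6 : q6 * q6 = 1 := by rcases p6 with h1 | h1 <;> rw [h1] <;> norm_num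
  have sq7 : q7 * q7 = 1 := by rcases p7 with h1 | h1 <;> rw [h1] <;> norm_num
  have sq8 : q8 * q8 = 1 := by rcases p8 with h1 | h1 <;> rw [h1] <;> norm_num
  have sq9 : q9 * q9 = 1 := by rcases p9 with h1 | h1 <;> rw [h1] <;> norm_num
  have sq10 : q10 * q10 = 1 := by rcases p10 with h1 | h1 <;> rw [h1] <;> norm_num
  set b : ℕ → ℤ := fun v =>
    if v = 1 then q2 else if v = 2 then q3*q5*q6*q7*q8*q9*q10 else if v = 3 then q4
    else if v = 4 then q5*q6*q7 else if v = 5 then q7 else if v = 6 then q8*q9*q10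
    else if v = 7 then q10 else if v = 8 then q6*q7 else if v = 9 then q9*q10 else 1
    with hbdef
  have b1 : b 1 = q2 := by rw [hbdef]; norm_num
  have b2 : b 2 = q3*q5*q6*q7*q8*q9*q10 := by rw [hbdef]; norm_num
  have b3 : b 3 = q4 := by rw [hbdef]; norm_num
  have b4 : b 4 = q5*q6*q7 := by rw [hbdef]; norm_num
  have b5 : b 5 = q7 := by rw [hbdef]; norm_num
  have b6 : b 6 = q8*q9*q10 := by rw [hbdef]; norm_num
  have b7 : b 7 = q10 := by rw [hbdef]; norm_num
  have b8 : b 8 = q6*q7 := by rw [hbdef]; norm_num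
  have b9 : b 9 = q9*q10 := by rw [hbdef]; norm_num
  have b10 : b 10 = 1 := by rw [hbdef]; norm_num
  have b11 : b 11 = 1 := by rw [hbdef]; norm_num
  have b12 : b 12 = 1 := by rw [hbdef]; norm_num
  have b13 : b 13 = 1 := by rw [hbdef]; norm_num
  have b14 : b 14 = 1 := by rw [hbdef]; norm_num
  have b15 : b 15 = 1 := by rw [hbdef]; norm_num
  have hbpm : ∀ v, b v = 1 ∨ b v = -1 := by
    intro v
    rw [hbdef]
    dsimp only
    split_ifs
    · exact p2
    · exact pmmul _ _ (pmmul _ _ (pmmul _ _ (pmmul _ _ (pmmul _ _ (pmmul _ _ p3 p5) p6) p7) p8) p9) p10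
    · exact p4
    · exact pmmul _ _ (pmmul _ _ p5 p6) p7
    · exact p7
    · exact pmmul _ _ (pmmul _ _ p8 p9) p10
    · exact p10
    · exact pmmul _ _ p6 p7
    · exact pmmul _ _ p9 p10
    · exact Or.inl rfl
  -- classical signs of the ten lines under b
  have c1 : classicalSgn b ({1,2,3} : Finset ℕ) = -q1 := by
    show (∏ v ∈ ({1,2,3}:Finset ℕ), b v) = -q1
    rw [show (∏ v ∈ ({1,2,3}:Finset ℕ), b v) = b 1 * (b 2 * b 3) from by
      simp [Finset.prod_insert, Finset.mem_insert], b1, b2, b3]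
    have key : q2 * (q3*q5*q6*q7*q8*q9*q10 * q4) =
        q1 * (q1*q2*q3*q4*q5*q6*q7*q8*q9*q10) := by
      rw [show q1 * (q1*q2*q3*q4*q5*q6*q7*q8*q9*q10) =
        (q1*q1) * (q2 * (q3*q5*q6*q7*q8*q9*q10 * q4)) from by ring, sq1, one_mul]
    rw [key, Hsval, mul_neg_one]
  have c2 : classicalSgn b ({1,10,11} : Finset ℕ) = q2 := by
    show (∏ v ∈ ({1,10,11}:Finset ℕ), b v) = q2
    rw [show (∏ v ∈ ({1,10,11}:Finset ℕ), b v) = b 1 * (b 10 * b 11) from by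
      simp [Finset.prod_insert, Finset.mem_insert], b1, b10, b11]
    ring
  have c3 : classicalSgn b ({2,4,6} : Finset ℕ) = q3 := by
    show (∏ v ∈ ({2,4,6}:Finset ℕ), b v) = q3
    rw [show (∏ v ∈ ({2,4,6}:Finset ℕ), b v) = b 2 * (b 4 * b 6) from by
      simp [Finset.prod_insert, Finset.mem_insert], b2, b4, b6]
    rw [show q3*q5*q6*q7*q8*q9*q10 * (q5*q6*q7 * (q8*q9*q10)) =
      q3 * ((q5*q5) * ((q6*q6) * ((q7*q7) * ((q8*q8) * ((q9*q9) * (q10*q10)))))) from by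
      ring, sq5, sq6, sq7, sq8, sq9, sq10]
    norm_num
  have c4 : classicalSgn b ({3,13,14} : Finset ℕ) = q4 := by
    show (∏ v ∈ ({3,13,14}:Finset ℕ), b v) = q4
    rw [show (∏ v ∈ ({3,13,14}:Finset ℕ), b v) = b 3 * (b 13 * b 14) from by
      simp [Finset.prod_insert, Finset.mem_insert], b3, b13, b14]
    ring
  have c5 : classicalSgn b ({4,8,12} : Finset ℕ) = q5 := by
    show (∏ v ∈ ({4,8,12}:Finset ℕ), b v) = q5
    rw [show (∏ v ∈ ({4,8,12}:Finset ℕ), b v) = b 4 * (b 8 * b 12) from by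
      simp [Finset.prod_insert, Finset.mem_insert], b4, b8, b12]
    rw [show q5*q6*q7 * (q6*q7 * 1) = q5 * ((q6*q6) * (q7*q7)) from by ring, sq6, sq7]
    norm_num
  have c6 : classicalSgn b ({5,8,13} : Finset ℕ) = q6 := by
    show (∏ v ∈ ({5,8,13}:Finset ℕ), b v) = q6
    rw [show (∏ v ∈ ({5,8,13}:Finset ℕ), b v) = b 5 * (b 8 * b 13) from by
      simp [Finset.prod_insert, Finset.mem_insert], b5, b8, b13]
    rw [show q7 * (q6*q7 * 1) = q6 * (q7*q7) from by ring, sq7]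
    norm_num
  have c7 : classicalSgn b ({5,10,15} : Finset ℕ) = q7 := by
    show (∏ v ∈ ({5,10,15}:Finset ℕ), b v) = q7
    rw [show (∏ v ∈ ({5,10,15}:Finset ℕ), b v) = b 5 * (b 10 * b 15) from by
      simp [Finset.prod_insert, Finset.mem_insert], b5, b10, b15]
    ring
  have c8 : classicalSgn b ({6,9,15} : Finset ℕ) = q8 := by
    show (∏ v ∈ ({6,9,15}:Finset ℕ), b v) = q8
    rw [show (∏ v ∈ ({6,9,15}:Finset ℕ), b v) = b 6 * (b 9 * b 15) from by
      simp [Finset.prod_insert, Finset.mem_insert], b6, b9, b15]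
    rw [show q8*q9*q10 * (q9*q10 * 1) = q8 * ((q9*q9) * (q10*q10)) from by ring, sq9, sq10]
    norm_num
  have c9 : classicalSgn b ({7,9,14} : Finset ℕ) = q9 := by
    show (∏ v ∈ ({7,9,14}:Finset ℕ), b v) = q9
    rw [show (∏ v ∈ ({7,9,14}:Finset ℕ), b v) = b 7 * (b 9 * b 14) from by
      simp [Finset.prod_insert, Finset.mem_insert], b7, b9, b14]
    rw [show q10 * (q9*q10 * 1) = q9 * (q10*q10) from by ring, sq10]
    norm_num
  have c10 : classicalSgn b ({7,11,12} : Finset ℕ) = q10 := by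
    show (∏ v ∈ ({7,11,12}:Finset ℕ), b v) = q10
    rw [show (∏ v ∈ ({7,11,12}:Finset ℕ), b v) = b 7 * (b 11 * b 12) from by
      simp [Finset.prod_insert, Finset.mem_insert], b7, b11, b12]
    ring
  have hfilter : twoSpreadLines.filter
      (fun hh => quantumSgn α hh ≠ classicalSgn b hh) = {({1,2,3} : Finset ℕ)} := by
    ext x
    simp only [Finset.mem_filter, Finset.mem_singleton]
    constructor
    · rintro ⟨hx, hpx⟩
      fin_cases hx
      · rfl
      · exact absurd (by rw [← hq2]; exact c2.symm) hpx
      · exact absurd (by rw [← hq3]; exact c3.symm) hpx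
      · exact absurd (by rw [← hq4]; exact c4.symm) hpx
      · exact absurd (by rw [← hq5]; exact c5.symm) hpx
      · exact absurd (by rw [← hq6]; exact c6.symm) hpx
      · exact absurd (by rw [← hq7]; exact c7.symm) hpx
      · exact absurd (by rw [← hq8]; exact c8.symm) hpx
      · exact absurd (by rw [← hq9]; exact c9.symm) hpx
      · exact absurd (by rw [← hq10]; exact c10.symm) hpx
    · rintro rfl
      refine ⟨by decide, ?_⟩
      rw [← hq1, c1]
      rcases p1 with h1 | h1 <;> rw [h1] <;> norm_num
  have h1in : (1:ℕ) ∈ { d : ℕ | ∃ a : ℕ → ℤ, (∀ v, a v = 1 ∨ a v = -1) ∧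
      d = (twoSpreadLines.filter
        (fun hh => quantumSgn α hh ≠ classicalSgn a hh)).card } :=
    ⟨b, hbpm, by rw [hfilter, Finset.card_singleton]⟩
  unfold contextualityDegree
  apply le_antisymm
  · exact Nat.sInf_le h1in
  · have hmem := Nat.sInf_mem (⟨1, h1in⟩ : Set.Nonempty _)
    rcases Nat.eq_zero_or_pos (sInf { d : ℕ | ∃ a : ℕ → ℤ, (∀ v, a v = 1 ∨ a v = -1) ∧
      d = (twoSpreadLines.filter
        (fun hh => quantumSgn α hh ≠ classicalSgn a hh)).card }) with h0 | hpos
    · rw [h0] at hmem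
      exact absurd hmem h0notin
    · exact hpos
end
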